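/- arXiv:2510.22579 — 2 statements merged into one kernel-verified Lean document; each statement's English description precedes it below -/
import Mathlib

section
/- Let {η_t} be a positive non-increasing sequence, D > 0, and let {x_t}, {x*_t} be points in a convex set of diameter D. Then Σ_{t=1}^{T-1} [‖x_{t+1} − x*_{t+1}‖²/η_{t+1} − ‖x_{t+1} − x*_t‖²/η_t] ≤ D²(1/η_T − 1/η_1) + 2D·Σ_{t=1}^{T-1} ‖x*_{t+1} − x*_t‖/η_{t+1}. -/
open Finset

theorem stmt_10 {n : ℕ} (η : ℕ → ℝ) (D : ℝ) (hD : 0 < D)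
    (X : Set (EuclideanSpace ℝ (Fin n))) (hXconv : Convex ℝ X)
    (hdiam : ∀ p ∈ X, ∀ q ∈ X, ‖p - q‖ ≤ D)
    (x xs : ℕ → EuclideanSpace ℝ (Fin n))
    (hx : ∀ t, x t ∈ X) (hxs : ∀ t, xs t ∈ X)
    (hηpos : ∀ t, 0 < η t) (hηmono : ∀ t : ℕ, η (t + 1) ≤ η t)
    (T : ℕ) (hT : 1 ≤ T) :
    ∑ t ∈ Finset.Icc 1 (T - 1),
        (‖x (t + 1) - xs (t + 1)‖ ^ 2 / η (t + 1) -
          ‖x (t + 1) - xs t‖ ^ 2 / η t) ≤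
      D ^ 2 * (1 / η T - 1 / η 1) +
        2 * D * ∑ t ∈ Finset.Icc 1 (T - 1), ‖xs (t + 1) - xs t‖ / η (t + 1) := by
  have key : ∀ t : ℕ,
      ‖x (t + 1) - xs (t + 1)‖ ^ 2 / η (t + 1) - ‖x (t + 1) - xs t‖ ^ 2 / η t ≤
        D ^ 2 * (1 / η (t + 1) - 1 / η t) +
          2 * D * (‖xs (t + 1) - xs t‖ / η (t + 1)) := by
    intro t
    set a := x (t + 1) - xs (t + 1) with ha
    set b := x (t + 1) - xs t with hb
    have habn : ‖a - b‖ = ‖xs (t + 1) - xs t‖ := by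
      rw [ha, hb]
      rw [show x (t + 1) - xs (t + 1) - (x (t + 1) - xs t) = -(xs (t + 1) - xs t) by abel,
        norm_neg]
    have hA : ‖a‖ ≤ D := hdiam _ (hx _) _ (hxs _)
    have hB : ‖b‖ ≤ D := hdiam _ (hx _) _ (hxs _)
    have hpos1 := hηpos t
    have hpos2 := hηpos (t + 1)
    have hmono := hηmono t
    have hinv : 1 / η t ≤ 1 / η (t + 1) := one_div_le_one_div_of_le hpos2 hmono
    have h1 : ‖a‖ ^ 2 / η (t + 1) - ‖b‖ ^ 2 / η t =
        ‖a‖ ^ 2 * (1 / η (t + 1) - 1 / η t) + (‖a‖ ^ 2 - ‖b‖ ^ 2) / η t := by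
      field_simp
      ring
    have h2 : ‖a‖ ^ 2 * (1 / η (t + 1) - 1 / η t) ≤ D ^ 2 * (1 / η (t + 1) - 1 / η t) := by
      apply mul_le_mul_of_nonneg_right _ (by linarith)
      exact pow_le_pow_left₀ (norm_nonneg a) hA 2
    have hab : ‖a‖ ^ 2 - ‖b‖ ^ 2 ≤ 2 * D * ‖a - b‖ := by
      nlinarith [norm_sub_norm_le a b, norm_nonneg a, norm_nonneg b, norm_nonneg (a - b)]
    have h3 : (‖a‖ ^ 2 - ‖b‖ ^ 2) / η t ≤ 2 * D * ‖a - b‖ / η (t + 1) := by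
      rcases le_or_gt (‖a‖ ^ 2 - ‖b‖ ^ 2) 0 with h | h
      · have : (‖a‖ ^ 2 - ‖b‖ ^ 2) / η t ≤ 0 := div_nonpos_iff.mpr (Or.inr ⟨h, hpos1.le⟩)
        refine this.trans ?_
        positivity
      · calc (‖a‖ ^ 2 - ‖b‖ ^ 2) / η t ≤ (‖a‖ ^ 2 - ‖b‖ ^ 2) / η (t + 1) := by
              gcongr
            _ ≤ 2 * D * ‖a - b‖ / η (t + 1) := by gcongr
    rw [h1]
    rw [habn] at h3
    rw [show 2 * D * (‖xs (t + 1) - xs t‖ / η (t + 1)) =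
        2 * D * ‖xs (t + 1) - xs t‖ / η (t + 1) by ring]
    linarith
  calc ∑ t ∈ Finset.Icc 1 (T - 1),
        (‖x (t + 1) - xs (t + 1)‖ ^ 2 / η (t + 1) - ‖x (t + 1) - xs t‖ ^ 2 / η t)
      ≤ ∑ t ∈ Finset.Icc 1 (T - 1),
        (D ^ 2 * (1 / η (t + 1) - 1 / η t) +
          2 * D * (‖xs (t + 1) - xs t‖ / η (t + 1))) :=
        Finset.sum_le_sum fun t _ => key t
    _ = D ^ 2 * ∑ t ∈ Finset.Icc 1 (T - 1), (1 / η (t + 1) - 1 / η t) +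
        2 * D * ∑ t ∈ Finset.Icc 1 (T - 1), ‖xs (t + 1) - xs t‖ / η (t + 1) := by
        rw [Finset.sum_add_distrib, Finset.mul_sum, Finset.mul_sum]
    _ ≤ D ^ 2 * (1 / η T - 1 / η 1) +
        2 * D * ∑ t ∈ Finset.Icc 1 (T - 1), ‖xs (t + 1) - xs t‖ / η (t + 1) := by
        have htel : ∑ t ∈ Finset.Icc 1 (T - 1), (1 / η (t + 1) - 1 / η t) =
            1 / η T - 1 / η 1 := by
          have hIcc : Finset.Icc 1 (T - 1) = Finset.Ico 1 T := by
            ext k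
            simp only [Finset.mem_Icc, Finset.mem_Ico]
            omega
          rw [hIcc, Finset.sum_Ico_eq_sum_range]
          have : ∀ i, 1 / η (1 + i + 1) - 1 / η (1 + i) =
              (fun j => 1 / η (j + 1)) (i + 1) - (fun j => 1 / η (j + 1)) i := by
            intro i
            simp only []
            rw [show 1 + i + 1 = i + 1 + 1 from by omega, show 1 + i = i + 1 from by omega]
          rw [Finset.sum_congr rfl fun i _ => this i,
            Finset.sum_range_sub (fun j => 1 / η (j + 1)),
            show T - 1 + 1 = T from by omega]
        rw [htel]
end

section
/- For ε_τ ≥ 0 with partial sums E_τ = Σ_{s=1}^τ ε_s, constants C > 0 and D > 0 with ε_τ ≤ D⁻² for all τ, define γ_τ = E_{τ-1} + D⁻² and λ_τ = 1/(C·√(γ_τ + 1)·√(log(γ_τ+1)+1)·(log(log(γ_τ+1)+1)+1)). Then Σ_{τ=1}^t 2λ_τ²ε_τ ≤ 4/C² for all t ≥ 1. -/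
open Finset

noncomputable def L2 (x : ℝ) : ℝ := Real.log (Real.log (x + 1) + 1) + 1
noncomputable def gg (x : ℝ) : ℝ := 1 / ((x + 1) * (Real.log (x + 1) + 1) * (L2 x) ^ 2)
noncomputable def FF (x : ℝ) : ℝ := -(1 / L2 x)

lemma L2_ge_one {x : ℝ} (hx : 0 ≤ x) : 1 ≤ L2 x := by
  have h1 : 0 ≤ Real.log (x + 1) := Real.log_nonneg (by linarith)
  have h2 : 0 ≤ Real.log (Real.log (x + 1) + 1) := Real.log_nonneg (by linarith)
  simp only [L2]; linarith

lemma logdiff {x y : ℝ} (hx : 0 < x) (hxy : x ≤ y) :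
    (y - x) / y ≤ Real.log y - Real.log x := by
  have hy : 0 < y := lt_of_lt_of_le hx hxy
  have h := Real.log_le_sub_one_of_pos (show 0 < x / y by positivity)
  rw [Real.log_div hx.ne' hy.ne'] at h
  have h2 : (y - x) / y = 1 - x / y := by field_simp
  linarith

lemma key {a b : ℝ} (ha : 0 ≤ a) (hab : a ≤ b) :
    (b - a) * gg b ≤ FF b - FF a := by
  have hla : 0 ≤ Real.log (a + 1) := Real.log_nonneg (by linarith)
  have hlog : Real.log (a + 1) ≤ Real.log (b + 1) := by gcongr <;> linarith
  have hlb : 0 ≤ Real.log (b + 1) := le_trans hla hlog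
  set x := Real.log (a + 1) + 1 with hxdef
  set y := Real.log (b + 1) + 1 with hydef
  have hx1 : (1:ℝ) ≤ x := by simp only [hxdef]; linarith
  have hxy : x ≤ y := by simp only [hxdef, hydef]; linarith
  have hy1 : (1:ℝ) ≤ y := le_trans hx1 hxy
  have hp1 : 1 ≤ L2 a := L2_ge_one ha
  have hq1 : 1 ≤ L2 b := L2_ge_one (ha.trans hab)
  have hpq : L2 a ≤ L2 b := by
    simp only [L2, ← hxdef, ← hydef]
    have : Real.log x ≤ Real.log y := by gcongr <;> linarith
    linarith
  have h1 : (b - a) / (b + 1) ≤ y - x := by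
    have h := logdiff (show (0:ℝ) < a + 1 by linarith) (show a + 1 ≤ b + 1 by linarith)
    have e : (b + 1) - (a + 1) = b - a := by ring
    rw [e] at h
    show (b - a) / (b + 1) ≤ (Real.log (b + 1) + 1) - (Real.log (a + 1) + 1)
    linarith
  have h2 : (y - x) / y ≤ L2 b - L2 a := by
    have h := logdiff (show (0:ℝ) < x by linarith) hxy
    simp only [L2, ← hxdef, ← hydef]
    linarith
  have hby : (0:ℝ) < (b + 1) * y := by nlinarith
  have h3 : (b - a) / ((b + 1) * y) ≤ L2 b - L2 a := by
    rw [← div_div]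
    refine le_trans ?_ h2
    gcongr
  have h3' : (b - a) ≤ (L2 b - L2 a) * ((b + 1) * y) := by
    rw [div_le_iff₀ hby] at h3; linarith
  have hFF : FF b - FF a = (L2 b - L2 a) / (L2 a * L2 b) := by
    simp only [FF]
    field_simp
    ring
  have hgg : (b - a) * gg b = (b - a) / ((b + 1) * y * (L2 b) ^ 2) := by
    simp only [gg, ← hydef]; ring
  rw [hFF, hgg]
  have hq0 : (0:ℝ) < L2 b := by linarith
  have hp0 : (0:ℝ) < L2 a := by linarith
  rw [div_le_div_iff₀ (mul_pos hby (pow_pos hq0 2)) (mul_pos hp0 hq0)]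
  have hba : 0 ≤ b - a := by linarith
  have hd : 0 ≤ L2 b - L2 a := by linarith
  have e2 := mul_le_mul_of_nonneg_right h3' (show (0:ℝ) ≤ L2 b * L2 b by nlinarith)
  nlinarith [e2, mul_le_mul_of_nonneg_left hpq hba]

lemma gg_mono {a b : ℝ} (ha : 0 ≤ a) (hab : a ≤ b) : gg b ≤ gg a := by
  have hla : (0:ℝ) ≤ Real.log (a + 1) := Real.log_nonneg (by linarith)
  have hlog : Real.log (a + 1) ≤ Real.log (b + 1) := by gcongr <;> linarith
  have hp1 : 1 ≤ L2 a := L2_ge_one ha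
  have hq1 : 1 ≤ L2 b := L2_ge_one (ha.trans hab)
  have hpq : L2 a ≤ L2 b := by
    simp only [L2]
    have : Real.log (Real.log (a + 1) + 1) ≤ Real.log (Real.log (b + 1) + 1) := by
      gcongr <;> linarith
    linarith
  simp only [gg]
  have hda : (0:ℝ) < (a + 1) * (Real.log (a + 1) + 1) * L2 a ^ 2 :=
    mul_pos (mul_pos (by linarith) (by linarith)) (pow_pos (by linarith) 2)
  apply one_div_le_one_div_of_le hda
  have m1 : (a + 1) * (Real.log (a + 1) + 1) ≤ (b + 1) * (Real.log (b + 1) + 1) := by nlinarith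
  have m2 : L2 a ^ 2 ≤ L2 b ^ 2 := by nlinarith
  have m0 : (0:ℝ) ≤ L2 a ^ 2 := by positivity
  nlinarith [mul_le_mul m1 m2 m0 (show (0:ℝ) ≤ (b + 1) * (Real.log (b + 1) + 1) by nlinarith)]

lemma FF_nonpos {x : ℝ} (hx : 0 ≤ x) : FF x ≤ 0 := by
  have h := L2_ge_one hx
  simp only [FF, neg_nonpos]
  exact div_nonneg zero_le_one (by linarith)

lemma FF_zero : FF 0 = -1 := by
  simp [FF, L2]

theorem stmt_16 (ε : ℕ → ℝ) (C D : ℝ) (hC : 0 < C) (hD : 0 < D)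
    (hε0 : ∀ τ, 0 ≤ ε τ) (hεD : ∀ τ, ε τ ≤ D⁻¹ ^ 2)
    (γ lam : ℕ → ℝ)
    (hγ : ∀ τ : ℕ, γ τ = (∑ s ∈ Finset.Icc 1 (τ - 1), ε s) + D⁻¹ ^ 2)
    (hlam : ∀ τ, lam τ = 1 / (C * Real.sqrt (γ τ + 1) *
      Real.sqrt (Real.log (γ τ + 1) + 1) *
      (Real.log (Real.log (γ τ + 1) + 1) + 1))) :
    ∀ t : ℕ, 1 ≤ t →
      ∑ τ ∈ Finset.Icc 1 t, 2 * (lam τ) ^ 2 * ε τ ≤ 4 / C ^ 2 := by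
  intro t ht
  set E : ℕ → ℝ := fun τ => ∑ s ∈ Finset.Icc 1 τ, ε s with hE
  have hE0 : E 0 = 0 := by simp [hE]
  have hEnonneg : ∀ τ, 0 ≤ E τ := fun τ => Finset.sum_nonneg (fun s _ => hε0 s)
  have hEstep : ∀ n : ℕ, E (n + 1) = E n + ε (n + 1) := by
    intro n
    simp only [hE]
    rw [Finset.sum_Icc_succ_top (by omega : 1 ≤ n + 1)]
  have hterm : ∀ τ ∈ Finset.Icc 1 t,
      2 * (lam τ) ^ 2 * ε τ ≤ (2 / C ^ 2) * (FF (E τ) - FF (E (τ - 1))) := by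
    intro τ hτ
    have hτ1 : 1 ≤ τ := (Finset.mem_Icc.mp hτ).1
    have hγnn : 0 ≤ γ τ := by
      rw [hγ τ]
      have h : 0 ≤ (∑ s ∈ Finset.Icc 1 (τ - 1), ε s) := Finset.sum_nonneg (fun s _ => hε0 s)
      positivity
    have hγ1 : (0:ℝ) < γ τ + 1 := by linarith
    have hl1 : (0:ℝ) ≤ Real.log (γ τ + 1) + 1 := by
      have := Real.log_nonneg (show (1:ℝ) ≤ γ τ + 1 by linarith); linarith
    have hL2 : 1 ≤ L2 (γ τ) := L2_ge_one hγnn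
    have hlam2 : (lam τ) ^ 2 = (1 / C ^ 2) * gg (γ τ) := by
      rw [hlam τ]
      rw [div_pow, one_pow, mul_pow, mul_pow, mul_pow,
        Real.sq_sqrt (by linarith), Real.sq_sqrt hl1]
      simp only [gg, L2]
      field_simp
    have hEτ : E τ = E (τ - 1) + ε τ := by
      have h : τ = (τ - 1) + 1 := by omega
      rw [h, hEstep, ← h]
    have hEle : E τ ≤ γ τ := by
      rw [hEτ, hγ τ]
      simp only [hE]
      linarith [hεD τ]
    have hmono : gg (γ τ) ≤ gg (E τ) := gg_mono (hEnonneg τ) hEle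
    have hεnn := hε0 τ
    have hkey : (E τ - E (τ - 1)) * gg (E τ) ≤ FF (E τ) - FF (E (τ - 1)) :=
      key (hEnonneg (τ - 1)) (by rw [hEτ]; linarith)
    calc 2 * (lam τ) ^ 2 * ε τ = (2 / C ^ 2) * (ε τ * gg (γ τ)) := by
          rw [hlam2]; ring
      _ ≤ (2 / C ^ 2) * (FF (E τ) - FF (E (τ - 1))) := by
          have hC2 : (0:ℝ) < 2 / C ^ 2 := by positivity
          have h1 : ε τ * gg (γ τ) ≤ ε τ * gg (E τ) :=
            mul_le_mul_of_nonneg_left hmono hεnn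
          have h2 : ε τ * gg (E τ) ≤ FF (E τ) - FF (E (τ - 1)) := by
            have h : ε τ = E τ - E (τ - 1) := by rw [hEτ]; ring
            rw [h]; exact hkey
          nlinarith
  refine le_trans (Finset.sum_le_sum hterm) ?_
  rw [← Finset.mul_sum]
  have htel : ∑ τ ∈ Finset.Icc 1 t, (FF (E τ) - FF (E (τ - 1))) = FF (E t) - FF (E 0) := by
    rw [← Finset.Ico_add_one_right_eq_Icc, Finset.sum_Ico_eq_sum_range]
    have h : ∀ i, FF (E (1 + i)) - FF (E (1 + i - 1)) = FF (E (i + 1)) - FF (E i) := by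
      intro i
      have e1 : 1 + i = i + 1 := by omega
      have e2 : 1 + i - 1 = i := by omega
      rw [e2, e1]
    simp only [h]
    have e3 : t + 1 - 1 = t := by omega
    rw [e3, Finset.sum_range_sub (fun i => FF (E i))]
  rw [htel, hE0, FF_zero]
  have hFFt : FF (E t) ≤ 0 := FF_nonpos (hEnonneg t)
  have hC2 : (0:ℝ) < C ^ 2 := by positivity
  rw [div_mul_eq_mul_div, div_le_div_iff₀ hC2 hC2]
  nlinarith
end
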